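/- For f = a_2a_4r + a_2a_3r^2 + a_2^2r^3 + 2a_1a_4r^2 + a_1a_3r^3 − a_1a_2r^4 ∈ B[r], the identity d(f) = a_1^2·b holds in B[r_1,r_2], where b = r_1^4r_2 + 2r_1^3r_2^2 + 2r_1^2r_2^3 + r_1r_2^4. -/

import Mathlib

/-!
`Bbar = 𝔽_5[a_1,a_2,a_3,a_4]` (the variable `0,1,2,3 : Fin 4` are `a_1, a_2, a_3, a_4`),
`q(t) = t^5 + a_1t^4 + a_2t^3 + a_3t^2 + a_4t`, and `etaR : Bbar → Bbar[r]` is the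
𝔽_5-algebra map sending `a_i` to the coefficient of `x^{5-i}` in `q(x+r) - q(r)`,
computed in `Bbar[r][x]`.  This is the reduction modulo `(5, a_5)` of the
Gorbounov–Hopkins–Mahowald Hopf algebroid at the prime `5`.
-/

/-- The ring `B = 𝔽_5[a_1,a_2,a_3,a_4]`. -/
abbrev Bbar : Type := MvPolynomial (Fin 4) (ZMod 5)

/-- The generator `a_1`. -/
noncomputable def a1 : Bbar := MvPolynomial.X 0
/-- The generator `a_2`. -/
noncomputable def a2 : Bbar := MvPolynomial.X 1
/-- The generator `a_3`. -/
noncomputable def a3 : Bbar := MvPolynomial.X 2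
/-- The generator `a_4`. -/
noncomputable def a4 : Bbar := MvPolynomial.X 3

/-- The polynomial `q(t) = t^5 + a_1t^4 + a_2t^3 + a_3t^2 + a_4t` as an element of `B[t]`. -/
noncomputable def q : Polynomial Bbar :=
  Polynomial.X ^ 5 + Polynomial.C a1 * Polynomial.X ^ 4 + Polynomial.C a2 * Polynomial.X ^ 3 +
    Polynomial.C a3 * Polynomial.X ^ 2 + Polynomial.C a4 * Polynomial.X

/-- `q(x+r) - q(r)`, an element of `B[r][x]` (the inner variable is `r`, the outer is `x`). -/
noncomputable def qShift : Polynomial (Polynomial Bbar) :=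
  Polynomial.eval₂ (Polynomial.C.comp Polynomial.C)
      (Polynomial.X + Polynomial.C Polynomial.X) q -
    Polynomial.eval₂ (Polynomial.C.comp Polynomial.C) (Polynomial.C Polynomial.X) q

/-- The right unit `η_R : B → B[r]`, sending `a_i` (for `i = 1,2,3,4`) to the coefficient of
`x^{5-i}` in `q(x+r) - q(r)`. -/
noncomputable def etaR : Bbar →ₐ[ZMod 5] Polynomial Bbar :=
  MvPolynomial.aeval (fun k : Fin 4 => qShift.coeff (4 - k.1))

/-- The cobar differential: for `f = ∑_k c_k r^k`, `d(f) = ∑_k η_R(c_k)[r:=r_1]·r_2^k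
− f[r:=r_1+r_2] + f[r:=r_1]`, an element of `B[r_1][r_2]` (the inner variable is `r_1`,
the outer is `r_2`). -/
noncomputable def cobarD (f : Polynomial Bbar) : Polynomial (Polynomial Bbar) :=
  (∑ k ∈ Finset.range (f.natDegree + 1),
      Polynomial.C (etaR (f.coeff k)) * Polynomial.X ^ k) -
    Polynomial.eval₂ (Polynomial.C.comp Polynomial.C)
      (Polynomial.C Polynomial.X + Polynomial.X) f +
    Polynomial.C f

/-- The class `b = r_1^4r_2 + 2r_1^3r_2^2 + 2r_1^2r_2^3 + r_1r_2^4`, the mod-5 reduction of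
`((r_1+r_2)^5 − r_1^5 − r_2^5)/5`. -/
noncomputable def bclass : Polynomial (Polynomial Bbar) :=
  Polynomial.C (Polynomial.X ^ 4) * Polynomial.X +
    2 * Polynomial.C (Polynomial.X ^ 3) * Polynomial.X ^ 2 +
    2 * Polynomial.C (Polynomial.X ^ 2) * Polynomial.X ^ 3 +
    Polynomial.C Polynomial.X * Polynomial.X ^ 4

open Polynomial in
lemma qShift_eq : qShift =
    C (C a4 + 2 * C a3 * X + 3 * C a2 * X ^ 2 + 4 * C a1 * X ^ 3 + 5 * X ^ 4) * X +
    C (C a3 + 3 * C a2 * X + 6 * C a1 * X ^ 2 + 10 * X ^ 3) * X ^ 2 +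
    C (C a2 + 4 * C a1 * X + 10 * X ^ 2) * X ^ 3 +
    C (C a1 + 5 * X) * X ^ 4 + X ^ 5 := by
  simp only [qShift, q, eval₂_add, eval₂_mul (S := Polynomial (Polynomial Bbar)), eval₂_pow (S := Polynomial (Polynomial Bbar)), eval₂_X, eval₂_C, RingHom.comp_apply,
    map_add, map_mul, map_pow, map_ofNat]
  ring

open Polynomial in
lemma etaR_a1 : etaR a1 = C a1 + 5 * X := by
  have h : etaR a1 = qShift.coeff 4 := by rw [a1]; exact MvPolynomial.aeval_X _ 0
  rw [h, qShift_eq]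
  simp only [coeff_add, coeff_C_mul, coeff_X_pow, coeff_X]
  norm_num

open Polynomial in
lemma etaR_a2 : etaR a2 = C a2 + 4 * C a1 * X + 10 * X ^ 2 := by
  have h : etaR a2 = qShift.coeff 3 := by rw [a2]; exact MvPolynomial.aeval_X _ 1
  rw [h, qShift_eq]
  simp only [coeff_add, coeff_C_mul, coeff_X_pow, coeff_X]
  norm_num

open Polynomial in
lemma etaR_a3 : etaR a3 = C a3 + 3 * C a2 * X + 6 * C a1 * X ^ 2 + 10 * X ^ 3 := by
  have h : etaR a3 = qShift.coeff 2 := by rw [a3]; exact MvPolynomial.aeval_X _ 2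
  rw [h, qShift_eq]
  simp only [coeff_add, coeff_C_mul, coeff_X_pow, coeff_X]
  norm_num

open Polynomial in
lemma etaR_a4 : etaR a4 = C a4 + 2 * C a3 * X + 3 * C a2 * X ^ 2 + 4 * C a1 * X ^ 3 + 5 * X ^ 4 := by
  have h : etaR a4 = qShift.coeff 1 := by rw [a4]; exact MvPolynomial.aeval_X _ 3
  rw [h, qShift_eq]
  simp only [coeff_add, coeff_C_mul, coeff_X_pow, coeff_X]
  norm_num

instance : IsRightCancelAdd (Polynomial (Polynomial Bbar)) :=
  ⟨fun a b c h => by have h' : b + a = c + a := h; rw [← add_sub_cancel_right b a, h']; exact add_sub_cancel_right c a⟩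

lemma four_ne_zero_Bbar : (4 : Bbar) ≠ 0 := by
  intro h
  have h2 := congrArg MvPolynomial.constantCoeff h
  simp only [map_ofNat, map_zero] at h2
  exact (by decide : (4 : ZMod 5) ≠ 0) h2

set_option maxHeartbeats 2000000 in
/-- For `f = a_2a_4r + a_2a_3r² + a_2²r³ + 2a_1a_4r² + a_1a_3r³ − a_1a_2r⁴`,
one has `d(f) = a_1²·b`. -/
theorem d2_a2x1 :
    cobarD
        (Polynomial.C (a2 * a4) * Polynomial.X + Polynomial.C (a2 * a3) * Polynomial.X ^ 2 +
          Polynomial.C (a2 ^ 2) * Polynomial.X ^ 3 +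
          2 * Polynomial.C (a1 * a4) * Polynomial.X ^ 2 +
          Polynomial.C (a1 * a3) * Polynomial.X ^ 3 -
          Polynomial.C (a1 * a2) * Polynomial.X ^ 4) =
      Polynomial.C (Polynomial.C (a1 ^ 2)) * bclass := by
  classical
  have h5 : (5 : Polynomial (Polynomial Bbar)) = 0 := by
    exact_mod_cast CharP.cast_eq_zero (Polynomial (Polynomial Bbar)) 5
  have h5b : (5 : Polynomial Bbar) = 0 := by
    exact_mod_cast CharP.cast_eq_zero (Polynomial Bbar) 5
  have hf : Polynomial.C (a2 * a4) * Polynomial.X + Polynomial.C (a2 * a3) * Polynomial.X ^ 2 +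
        Polynomial.C (a2 ^ 2) * Polynomial.X ^ 3 +
        2 * Polynomial.C (a1 * a4) * Polynomial.X ^ 2 +
        Polynomial.C (a1 * a3) * Polynomial.X ^ 3 -
        Polynomial.C (a1 * a2) * Polynomial.X ^ 4 =
      Polynomial.C (a2 * a4) * Polynomial.X +
        Polynomial.C (a2 * a3 + 2 * (a1 * a4)) * Polynomial.X ^ 2 +
        Polynomial.C (a2 ^ 2 + a1 * a3) * Polynomial.X ^ 3 +
        Polynomial.C (4 * (a1 * a2)) * Polynomial.X ^ 4 := by
    simp only [map_add, map_mul, map_pow, map_neg, map_ofNat]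
    linear_combination (-(Polynomial.C a1 * Polynomial.C a2 * Polynomial.X ^ 4)) * h5b
  rw [hf]
  have hdeg : (Polynomial.C (a2 * a4) * Polynomial.X +
        Polynomial.C (a2 * a3 + 2 * (a1 * a4)) * Polynomial.X ^ 2 +
        Polynomial.C (a2 ^ 2 + a1 * a3) * Polynomial.X ^ 3 +
        Polynomial.C (4 * (a1 * a2)) * Polynomial.X ^ 4).natDegree = 4 := by
    haveI : Fact (Nat.Prime 5) := ⟨by norm_num⟩
    compute_degree!
    rw [a1, a2]
    exact ⟨four_ne_zero_Bbar, MvPolynomial.X_ne_zero (σ := Fin 4) (R := ZMod 5) 0,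
      MvPolynomial.X_ne_zero (σ := Fin 4) (R := ZMod 5) 1⟩
  rw [cobarD, hdeg]
  simp only [Finset.sum_range_succ, Finset.sum_range_zero]
  simp only [Polynomial.coeff_add, Polynomial.coeff_C_mul, Polynomial.coeff_X_pow,
    Polynomial.coeff_X]
  norm_num
  simp only [Polynomial.eval₂_add, Polynomial.eval₂_mul (S := Polynomial (Polynomial Bbar)), Polynomial.eval₂_pow (S := Polynomial (Polynomial Bbar)), Polynomial.eval₂_X,
    Polynomial.eval₂_C, RingHom.comp_apply]
  simp only [map_add, map_mul, map_pow, map_ofNat, etaR_a1, etaR_a2, etaR_a3, etaR_a4, bclass]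
  linear_combination ((40) * (Polynomial.C Polynomial.X : Polynomial (Polynomial Bbar)) ^ 3 * (Polynomial.X : Polynomial (Polynomial Bbar)) ^ 4 +
        (30) * (Polynomial.C Polynomial.X : Polynomial (Polynomial Bbar)) ^ 4 * (Polynomial.X : Polynomial (Polynomial Bbar)) ^ 3 +
        (30) * (Polynomial.C Polynomial.X : Polynomial (Polynomial Bbar)) ^ 5 * (Polynomial.X : Polynomial (Polynomial Bbar)) ^ 2 +
        (10) * (Polynomial.C Polynomial.X : Polynomial (Polynomial Bbar)) ^ 6 * (Polynomial.X : Polynomial (Polynomial Bbar)) +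
        (2) * Polynomial.C (Polynomial.C a4) * (Polynomial.C Polynomial.X : Polynomial (Polynomial Bbar)) * (Polynomial.X : Polynomial (Polynomial Bbar)) ^ 2 +
        (2) * Polynomial.C (Polynomial.C a4) * (Polynomial.C Polynomial.X : Polynomial (Polynomial Bbar)) ^ 2 * (Polynomial.X : Polynomial (Polynomial Bbar)) +
        (1) * Polynomial.C (Polynomial.C a3) * (Polynomial.C Polynomial.X : Polynomial (Polynomial Bbar)) * (Polynomial.X : Polynomial (Polynomial Bbar)) ^ 3 +
        (6) * Polynomial.C (Polynomial.C a3) * (Polynomial.C Polynomial.X : Polynomial (Polynomial Bbar)) ^ 2 * (Polynomial.X : Polynomial (Polynomial Bbar)) ^ 2 +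
        (4) * Polynomial.C (Polynomial.C a3) * (Polynomial.C Polynomial.X : Polynomial (Polynomial Bbar)) ^ 3 * (Polynomial.X : Polynomial (Polynomial Bbar)) +
        (4) * Polynomial.C (Polynomial.C a2) * (Polynomial.C Polynomial.X : Polynomial (Polynomial Bbar)) * (Polynomial.X : Polynomial (Polynomial Bbar)) ^ 4 +
        (7) * Polynomial.C (Polynomial.C a2) * (Polynomial.C Polynomial.X : Polynomial (Polynomial Bbar)) ^ 2 * (Polynomial.X : Polynomial (Polynomial Bbar)) ^ 3 +
        (14) * Polynomial.C (Polynomial.C a2) * (Polynomial.C Polynomial.X : Polynomial (Polynomial Bbar)) ^ 3 * (Polynomial.X : Polynomial (Polynomial Bbar)) ^ 2 +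
        (7) * Polynomial.C (Polynomial.C a2) * (Polynomial.C Polynomial.X : Polynomial (Polynomial Bbar)) ^ 4 * (Polynomial.X : Polynomial (Polynomial Bbar)) +
        (24) * Polynomial.C (Polynomial.C a1) * (Polynomial.C Polynomial.X : Polynomial (Polynomial Bbar)) ^ 2 * (Polynomial.X : Polynomial (Polynomial Bbar)) ^ 4 +
        (24) * Polynomial.C (Polynomial.C a1) * (Polynomial.C Polynomial.X : Polynomial (Polynomial Bbar)) ^ 3 * (Polynomial.X : Polynomial (Polynomial Bbar)) ^ 3 +
        (30) * Polynomial.C (Polynomial.C a1) * (Polynomial.C Polynomial.X : Polynomial (Polynomial Bbar)) ^ 4 * (Polynomial.X : Polynomial (Polynomial Bbar)) ^ 2 +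
        (12) * Polynomial.C (Polynomial.C a1) * (Polynomial.C Polynomial.X : Polynomial (Polynomial Bbar)) ^ 5 * (Polynomial.X : Polynomial (Polynomial Bbar)) +
        (1) * Polynomial.C (Polynomial.C a1) * Polynomial.C (Polynomial.C a3) * (Polynomial.C Polynomial.X : Polynomial (Polynomial Bbar)) * (Polynomial.X : Polynomial (Polynomial Bbar)) ^ 2 +
        (1) * Polynomial.C (Polynomial.C a1) * Polynomial.C (Polynomial.C a3) * (Polynomial.C Polynomial.X : Polynomial (Polynomial Bbar)) ^ 2 * (Polynomial.X : Polynomial (Polynomial Bbar)) +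
        (-1) * Polynomial.C (Polynomial.C a1) * Polynomial.C (Polynomial.C a2) * (Polynomial.C Polynomial.X : Polynomial (Polynomial Bbar)) * (Polynomial.X : Polynomial (Polynomial Bbar)) ^ 3 +
        (3) * Polynomial.C (Polynomial.C a1) ^ 2 * (Polynomial.C Polynomial.X : Polynomial (Polynomial Bbar)) * (Polynomial.X : Polynomial (Polynomial Bbar)) ^ 4 +
        (4) * Polynomial.C (Polynomial.C a1) ^ 2 * (Polynomial.C Polynomial.X : Polynomial (Polynomial Bbar)) ^ 2 * (Polynomial.X : Polynomial (Polynomial Bbar)) ^ 3 +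
        (6) * Polynomial.C (Polynomial.C a1) ^ 2 * (Polynomial.C Polynomial.X : Polynomial (Polynomial Bbar)) ^ 3 * (Polynomial.X : Polynomial (Polynomial Bbar)) ^ 2 +
        (3) * Polynomial.C (Polynomial.C a1) ^ 2 * (Polynomial.C Polynomial.X : Polynomial (Polynomial Bbar)) ^ 4 * (Polynomial.X : Polynomial (Polynomial Bbar))) * h5
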